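/- Let φ : ℝⁿ → ℝ ∪ {±∞} be a function and x̄ ∈ dom φ. Then the steepest descent rate gr↓φ(x̄) is strictly positive if and only if 0 belongs to the interior of the Fréchet subdifferential ∂̂φ(x̄). -/

import Mathlib

open Filter Topology Metric Set RealInnerProductSpace

/-- The steepest descent rate of an extended-real-valued function `φ` at `xb`:
`liminf_{x → xb, x ≠ xb} (φ x − φ xb)/‖x − xb‖`. -/
noncomputable def steepestDescentRate {n : ℕ}
    (φ : EuclideanSpace ℝ (Fin n) → EReal) (xb : EuclideanSpace ℝ (Fin n)) : EReal :=
  Filter.liminf (fun x => (φ x - φ xb) * ((‖x - xb‖⁻¹ : ℝ) : EReal)) (𝓝[≠] xb)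

/-- The Fréchet subdifferential of `φ : ℝⁿ → ℝ ∪ {±∞}` at `xb`:
`{x* : liminf_{x→xb, x≠xb} (φ x − φ xb − ⟨x*, x − xb⟩)/‖x − xb‖ ≥ 0}`. -/
noncomputable def frechetSubdiff {n : ℕ}
    (φ : EuclideanSpace ℝ (Fin n) → EReal) (xb : EuclideanSpace ℝ (Fin n)) :
    Set (EuclideanSpace ℝ (Fin n)) :=
  {p | (0 : EReal) ≤ Filter.liminf
    (fun x => (φ x - φ xb - ((⟪p, x - xb⟫ : ℝ) : EReal)) * ((‖x - xb‖⁻¹ : ℝ) : EReal))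
    (𝓝[≠] xb)}

private lemma sub_coe_mul_coe (a : EReal) (c t : ℝ) (ht : 0 < t) :
    (a - (c : EReal)) * (t : EReal) = a * (t : EReal) - ((c * t : ℝ) : EReal) := by
  have htE : (0 : EReal) < (t : ℝ) := by exact_mod_cast ht
  induction a with
  | bot =>
      rw [EReal.bot_sub, EReal.bot_mul_of_pos htE, EReal.bot_sub]
  | coe a =>
      norm_cast
      ring
  | top =>
      rw [EReal.top_sub_coe, EReal.top_mul_of_pos htE, EReal.top_sub_coe]

/-- For `φ : ℝⁿ → ℝ ∪ {±∞}` and `xb ∈ dom φ`, the steepest descent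
rate `gr↓φ(xb)` is strictly positive iff `0` belongs to the interior of the Fréchet
subdifferential `∂̂φ(xb)`. -/
theorem descentRate_pos_iff_zero_mem_int_frechetSubdiff {n : ℕ}
    (φ : EuclideanSpace ℝ (Fin n) → EReal) (xb : EuclideanSpace ℝ (Fin n))
    (htop : φ xb ≠ ⊤) (hbot : φ xb ≠ ⊥) :
    (0 : EReal) < steepestDescentRate φ xb ↔
      (0 : EuclideanSpace ℝ (Fin n)) ∈ interior (frechetSubdiff φ xb) := by
  set L : EuclideanSpace ℝ (Fin n) → EReal :=
    fun x => (φ x - φ xb) * ((‖x - xb‖⁻¹ : ℝ) : EReal) with hLdef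
  constructor
  · intro hpos
    obtain ⟨ε, hε0, hεL⟩ := EReal.exists_between_coe_real hpos
    have hε0' : (0 : ℝ) < ε := by exact_mod_cast hε0
    have hsub : ball (0 : EuclideanSpace ℝ (Fin n)) ε ⊆ frechetSubdiff φ xb := by
      intro p hp
      have hpnorm : ‖p‖ < ε := by simpa using mem_ball_iff_norm.1 hp
      have hev : ∀ᶠ x in 𝓝[≠] xb, (ε : EReal) < L x :=
        Filter.eventually_lt_of_lt_liminf hεL
      rw [frechetSubdiff, Set.mem_setOf_eq]
      refine Filter.le_liminf_of_le (by isBoundedDefault) ?_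
      filter_upwards [hev, self_mem_nhdsWithin] with x hx (hne : x ≠ xb)
      have hy : (0 : ℝ) < ‖x - xb‖ := by
        rw [norm_pos_iff]; exact sub_ne_zero.2 hne
      have ht : (0 : ℝ) < ‖x - xb‖⁻¹ := inv_pos.2 hy
      rw [sub_coe_mul_coe _ _ _ ht]
      have hip : ⟪p, x - xb⟫ * ‖x - xb‖⁻¹ ≤ ‖p‖ := by
        have := real_inner_le_norm p (x - xb)
        calc ⟪p, x - xb⟫ * ‖x - xb‖⁻¹ ≤ (‖p‖ * ‖x - xb‖) * ‖x - xb‖⁻¹ := by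
              exact mul_le_mul_of_nonneg_right this ht.le
          _ = ‖p‖ := by field_simp
      have h1 : ((⟪p, x - xb⟫ * ‖x - xb‖⁻¹ : ℝ) : EReal) ≤ (φ x - φ xb) * ((‖x - xb‖⁻¹ : ℝ) : EReal) := by
        refine le_of_lt (lt_of_le_of_lt ?_ hx)
        exact_mod_cast le_trans hip hpnorm.le
      have h2 := EReal.sub_le_sub h1 (le_refl ((⟪p, x - xb⟫ * ‖x - xb‖⁻¹ : ℝ) : EReal))
      have h3 : ((⟪p, x - xb⟫ * ‖x - xb‖⁻¹ : ℝ) : EReal) - ((⟪p, x - xb⟫ * ‖x - xb‖⁻¹ : ℝ) : EReal) = 0 := by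
        rw [← EReal.coe_sub, sub_self, EReal.coe_zero]
      rwa [h3] at h2
    exact interior_maximal hsub isOpen_ball (mem_ball_self hε0')
  · intro h0
    obtain ⟨ε, hε0, hball⟩ := Metric.mem_nhds_iff.1 (mem_interior_iff_mem_nhds.1 h0)
    -- finite subcover of the unit sphere by unit balls centered on the sphere
    obtain ⟨T, hTsub, hTfin, hTcover⟩ :=
      (isCompact_sphere (0 : EuclideanSpace ℝ (Fin n)) 1).elim_finite_subcover_image
        (b := sphere (0 : EuclideanSpace ℝ (Fin n)) 1) (c := fun u => ball u 1)
        (fun u _ => isOpen_ball)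
        (fun v hv => Set.mem_iUnion₂.2 ⟨v, hv, mem_ball_self one_pos⟩)
    -- each (ε/2)•u is in the subdifferential
    have hmem : ∀ u ∈ T, ∀ᶠ x in 𝓝[≠] xb,
        (-(ε/8) : ℝ) < (φ x - φ xb - ((⟪(ε/2) • u, x - xb⟫ : ℝ) : EReal))
          * ((‖x - xb‖⁻¹ : ℝ) : EReal) := by
      intro u hu
      have hu1 : ‖u‖ = 1 := mem_sphere_zero_iff_norm.1 (hTsub hu)
      have hpball : (ε/2) • u ∈ ball (0 : EuclideanSpace ℝ (Fin n)) ε := by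
        rw [mem_ball_zero_iff, norm_smul, hu1]
        rw [Real.norm_eq_abs, abs_of_pos (by linarith)]
        linarith
      have hsd := hball hpball
      rw [frechetSubdiff, Set.mem_setOf_eq] at hsd
      refine Filter.eventually_lt_of_lt_liminf (lt_of_lt_of_le ?_ hsd)
      exact_mod_cast (by linarith : -(ε/8) < (0:ℝ))
    have hev : ∀ᶠ x in 𝓝[≠] xb, ∀ u ∈ T,
        (-(ε/8) : ℝ) < (φ x - φ xb - ((⟪(ε/2) • u, x - xb⟫ : ℝ) : EReal))
          * ((‖x - xb‖⁻¹ : ℝ) : EReal) :=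
      (Filter.eventually_all_finite hTfin).2 hmem
    have hfinal : ∀ᶠ x in 𝓝[≠] xb, ((ε/8 : ℝ) : EReal) < L x := by
      filter_upwards [hev, self_mem_nhdsWithin] with x hx (hne : x ≠ xb)
      have hy : (0 : ℝ) < ‖x - xb‖ := by
        rw [norm_pos_iff]; exact sub_ne_zero.2 hne
      have ht : (0 : ℝ) < ‖x - xb‖⁻¹ := inv_pos.2 hy
      set v : EuclideanSpace ℝ (Fin n) := ‖x - xb‖⁻¹ • (x - xb) with hvdef
      have hv1 : ‖v‖ = 1 := by
        rw [hvdef, norm_smul, Real.norm_eq_abs, abs_of_pos ht, inv_mul_cancel₀ hy.ne']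
      obtain ⟨u, huT, huv⟩ := Set.mem_iUnion₂.1 (hTcover (mem_sphere_zero_iff_norm.2 hv1))
      have hu1 : ‖u‖ = 1 := mem_sphere_zero_iff_norm.1 (hTsub huT)
      have hdist : ‖v - u‖ < 1 := by
        have := mem_ball_iff_norm.1 huv
        simpa using this
      have hinner : (1/2 : ℝ) < ⟪u, v⟫ := by
        have hsq : ‖v - u‖ ^ 2 = ‖v‖ ^ 2 - 2 * ⟪v, u⟫ + ‖u‖ ^ 2 := norm_sub_sq_real v u
        have hsym : ⟪v, u⟫ = ⟪u, v⟫ := real_inner_comm u v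
        have h2 : ‖v - u‖ ^ 2 < 1 := by nlinarith [norm_nonneg (v - u)]
        nlinarith
      have hipr : ⟪(ε/2) • u, x - xb⟫ * ‖x - xb‖⁻¹ = (ε/2) * ⟪u, v⟫ := by
        rw [real_inner_smul_left, hvdef, real_inner_smul_right]
        ring
      have hkey := hx u huT
      rw [sub_coe_mul_coe _ _ _ ht] at hkey
      have heq : L x = ((φ x - φ xb) * ((‖x - xb‖⁻¹ : ℝ) : EReal)
          - ((⟪(ε/2) • u, x - xb⟫ * ‖x - xb‖⁻¹ : ℝ) : EReal))
          + ((⟪(ε/2) • u, x - xb⟫ * ‖x - xb‖⁻¹ : ℝ) : EReal) :=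
        (EReal.sub_add_cancel).symm
      rw [hLdef]
      simp only []
      rw [show (φ x - φ xb) * ((‖x - xb‖⁻¹ : ℝ) : EReal)
          = ((φ x - φ xb) * ((‖x - xb‖⁻¹ : ℝ) : EReal)
          - ((⟪(ε/2) • u, x - xb⟫ * ‖x - xb‖⁻¹ : ℝ) : EReal))
          + ((⟪(ε/2) • u, x - xb⟫ * ‖x - xb‖⁻¹ : ℝ) : EReal) from heq]
      have h2 : ((ε/4 : ℝ) : EReal) < ((⟪(ε/2) • u, x - xb⟫ * ‖x - xb‖⁻¹ : ℝ) : EReal) := by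
        rw [hipr]
        exact_mod_cast (by nlinarith : (ε/4 : ℝ) < (ε/2) * ⟪u, v⟫)
      have := EReal.add_lt_add hkey h2
      calc ((ε/8 : ℝ) : EReal) = ((-(ε/8) : ℝ) : EReal) + ((ε/4 : ℝ) : EReal) := by
            norm_cast; ring
        _ < _ := this
    have : ((ε/8 : ℝ) : EReal) ≤ steepestDescentRate φ xb :=
      Filter.le_liminf_of_le (by isBoundedDefault) (hfinal.mono fun x hx => hx.le)
    refine lt_of_lt_of_le ?_ this
    exact_mod_cast (by linarith : (0:ℝ) < ε/8)
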